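/- Let G be a graph with weight function w : V(G) → ℝ. Then G is not w-well-covered if and only if there exist two maximal independent sets S₁ and S₂ of G with w(S₁) ≠ w(S₂) such that the induced subgraph G[S₁ △ S₂] is complete bipartite. -/

import Mathlib

open SimpleGraph Set

variable {V : Type*} [Fintype V] [DecidableEq V]

/-- `N_i(S)`: vertices whose minimum distance to the set `S` equals `i`. -/
def NSet (G : SimpleGraph V) (i : ℕ) (S : Set V) : Set V :=
  {u | (⨅ s ∈ S, G.edist s u) = (i : ℕ∞)}

/-- `N_i(x)`: vertices at distance exactly `i` from `x`. -/
def Nv (G : SimpleGraph V) (i : ℕ) (x : V) : Set V := {u | G.edist x u = (i : ℕ∞)}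

/-- `S` is an independent set of `G`. -/
def IsIndep (G : SimpleGraph V) (S : Set V) : Prop :=
  S.Pairwise fun u v => ¬ G.Adj u v

/-- `A` dominates `T`. -/
def Dominates (G : SimpleGraph V) (A T : Set V) : Prop :=
  T ⊆ A ∪ {u | ∃ a ∈ A, G.Adj a u}

/-- `S` is a maximal independent set of `G`. -/
def IsMaxIndep (G : SimpleGraph V) (S : Set V) : Prop :=
  IsIndep G S ∧ ∀ T, IsIndep G T → S ⊆ T → T = S

/-- The induced subgraph on `X ∪ Y` is complete bipartite with parts `X`, `Y`. -/
def IsCompBipartite (G : SimpleGraph V) (X Y : Set V) : Prop :=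
  X.Nonempty ∧ Y.Nonempty ∧ Disjoint X Y ∧ IsIndep G X ∧ IsIndep G Y ∧
    ∀ x ∈ X, ∀ y ∈ Y, G.Adj x y

/-- `B = (X, Y)` is a generating subgraph of `G`. -/
def Generating (G : SimpleGraph V) (X Y : Set V) : Prop :=
  IsCompBipartite G X Y ∧ ∃ S : Set V, IsIndep G S ∧ Disjoint S (X ∪ Y) ∧
    IsMaxIndep G (S ∪ X) ∧ IsMaxIndep G (S ∪ Y)

/-- `G` contains a (not necessarily induced) cycle on `k` vertices. -/
def HasCycle (G : SimpleGraph V) (k : ℕ) : Prop :=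
  ∃ f : ZMod k → V, Function.Injective f ∧ ∀ i, G.Adj (f i) (f (i + 1))

/-- Weight of a set of vertices. -/
noncomputable def wt (w : V → ℝ) (S : Set V) : ℝ := ∑ x ∈ S.toFinite.toFinset, w x

/-- `G` is `w`-well-covered. -/
def WWellCovered (G : SimpleGraph V) (w : V → ℝ) : Prop :=
  ∀ S T : Set V, IsMaxIndep G S → IsMaxIndep G T → wt w S = wt w T

lemma exists_maxIndep_superset (G : SimpleGraph V) {I : Set V} (hI : IsIndep G I) :
    ∃ M, I ⊆ M ∧ IsMaxIndep G M := by
  obtain ⟨M, hM, hmax⟩ := Set.Finite.exists_maximalFor Set.ncard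
    {T : Set V | IsIndep G T ∧ I ⊆ T} (Set.toFinite _) ⟨I, hI, subset_rfl⟩
  refine ⟨M, hM.2, hM.1, ?_⟩
  intro T hT hsub
  have hTmem : T ∈ {T : Set V | IsIndep G T ∧ I ⊆ T} := ⟨hT, hM.2.trans hsub⟩
  have hcard := hmax hTmem (Set.ncard_le_ncard hsub (Set.toFinite T))
  exact (Set.eq_of_subset_of_ncard_le hsub hcard (Set.toFinite T)).symm

theorem not_wWellCovered_iff (G : SimpleGraph V) (w : V → ℝ) :
    ¬ WWellCovered G w ↔
      ∃ S₁ S₂ : Set V, IsMaxIndep G S₁ ∧ IsMaxIndep G S₂ ∧ wt w S₁ ≠ wt w S₂ ∧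
        ∃ X Y : Set V, X ∪ Y = symmDiff S₁ S₂ ∧ IsCompBipartite G X Y := by
  constructor
  · intro h
    -- the set of "bad" pairs
    set P : Set (Set V × Set V) :=
      {p | IsMaxIndep G p.1 ∧ IsMaxIndep G p.2 ∧ wt w p.1 ≠ wt w p.2} with hP
    have hPne : P.Nonempty := by
      rw [WWellCovered] at h
      push_neg at h
      obtain ⟨S, T, hS, hT, hne⟩ := h
      exact ⟨(S, T), hS, hT, hne⟩
    obtain ⟨p, hp, hmax⟩ := Set.Finite.exists_maximalFor
      (fun p : Set V × Set V => (p.1 ∩ p.2).ncard) P (Set.toFinite _) hPne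
    have hmax' : ∀ q ∈ P, (q.1 ∩ q.2).ncard ≤ (p.1 ∩ p.2).ncard := by
      intro q hq
      rcases le_total ((p.1 ∩ p.2).ncard) ((q.1 ∩ q.2).ncard) with hle | hle
      · exact hmax hq hle
      · exact hle
    obtain ⟨M₁, M₂⟩ := p
    obtain ⟨hM₁, hM₂, hne⟩ := hp
    simp only at hM₁ hM₂ hne hmax'
    have hsymm : Symmetric fun u v : V => ¬ G.Adj u v :=
      fun u v h hadj => h hadj.symm
    -- core claim: every vertex of M₂ \ M₁ is adjacent to every vertex of M₁ \ M₂
    have hadj : ∀ y ∈ M₂ \ M₁, ∀ x ∈ M₁ \ M₂, G.Adj y x := by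
      intro y hy x hx
      have hyM₂ : y ∈ M₂ := hy.1
      have hyM₁ : y ∉ M₁ := hy.2
      set A : Set V := {a ∈ M₁ | G.Adj y a} with hA
      have hinterA : M₁ ∩ M₂ ⊆ M₁ \ A := by
        intro a ha
        refine ⟨ha.1, fun haA => ?_⟩
        have hne' : y ≠ a := fun h => hyM₁ (h ▸ ha.1)
        exact hM₂.1 hyM₂ ha.2 hne' haA.2
      have hbase : IsIndep G (insert y (M₁ \ A)) := by
        haveI : Std.Symm (fun u v : V => ¬ G.Adj u v) := ⟨fun a b h => hsymm h⟩
        rw [IsIndep, Set.pairwise_insert_of_symm]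
        refine ⟨hM₁.1.mono diff_subset, fun b hb _ hadj => hb.2 ⟨hb.1, hadj⟩⟩
      obtain ⟨N, hsubN, hN⟩ := exists_maxIndep_superset G hbase
      -- N ∩ M₂ is strictly bigger than M₁ ∩ M₂
      have hyint : y ∉ M₁ ∩ M₂ := fun h => hyM₁ h.1
      have hins : insert y (M₁ ∩ M₂) ⊆ N ∩ M₂ := by
        intro a ha
        rcases ha with rfl | ha
        · exact ⟨hsubN (Set.mem_insert _ _), hyM₂⟩
        · exact ⟨hsubN (Set.mem_insert_of_mem _ (hinterA ha)), ha.2⟩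
      have hlt : (M₁ ∩ M₂).ncard < (N ∩ M₂).ncard := by
        have h1 : (insert y (M₁ ∩ M₂)).ncard = (M₁ ∩ M₂).ncard + 1 :=
          Set.ncard_insert_of_notMem hyint (Set.toFinite _)
        have h2 : (insert y (M₁ ∩ M₂)).ncard ≤ (N ∩ M₂).ncard :=
          Set.ncard_le_ncard hins (Set.toFinite _)
        omega
      -- hence w(N) = w(M₂), so w(M₁) ≠ w(N)
      have hwN : wt w N = wt w M₂ := by
        by_contra hwne
        have : ((N, M₂) : Set V × Set V) ∈ P := ⟨hN, hM₂, hwne⟩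
        exact absurd (hmax' _ this) (by simpa using hlt.not_ge)
      have hwM₁N : wt w M₁ ≠ wt w N := by rw [hwN]; exact hne
      have hq : ((M₁, N) : Set V × Set V) ∈ P := ⟨hM₁, hN, hwM₁N⟩
      have hle := hmax' _ hq
      simp only at hle
      -- now x must be in A, i.e. adjacent to y
      by_contra hnadj
      have hxA : x ∉ A := fun hxA => hnadj hxA.2
      have hxN : x ∈ N := hsubN (Set.mem_insert_of_mem _ ⟨hx.1, hxA⟩)
      have hxint : x ∉ M₁ ∩ M₂ := fun h => hx.2 h.2
      have hins' : insert x (M₁ ∩ M₂) ⊆ M₁ ∩ N := by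
        intro a ha
        rcases ha with rfl | ha
        · exact ⟨hx.1, hxN⟩
        · exact ⟨ha.1, hsubN (Set.mem_insert_of_mem _ (hinterA ha))⟩
      have h1 : (insert x (M₁ ∩ M₂)).ncard = (M₁ ∩ M₂).ncard + 1 :=
        Set.ncard_insert_of_notMem hxint (Set.toFinite _)
      have h2 : (insert x (M₁ ∩ M₂)).ncard ≤ (M₁ ∩ N).ncard :=
        Set.ncard_le_ncard hins' (Set.toFinite _)
      omega
    -- assemble the answer
    refine ⟨M₁, M₂, hM₁, hM₂, hne, M₁ \ M₂, M₂ \ M₁, ?_, ?_, ?_, ?_, ?_, ?_, ?_⟩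
    · rw [Set.symmDiff_def]
    · -- M₁ \ M₂ nonempty
      rw [Set.nonempty_iff_ne_empty]
      intro hemp
      have hsub : M₁ ⊆ M₂ := by rwa [Set.diff_eq_empty] at hemp
      exact hne (by rw [hM₁.2 M₂ hM₂.1 hsub])
    · rw [Set.nonempty_iff_ne_empty]
      intro hemp
      have hsub : M₂ ⊆ M₁ := by rwa [Set.diff_eq_empty] at hemp
      exact hne (by rw [hM₂.2 M₁ hM₁.1 hsub])
    · exact disjoint_sdiff_sdiff
    · exact hM₁.1.mono diff_subset
    · exact hM₂.1.mono diff_subset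
    · exact fun x hx y hy => (hadj y hy x hx).symm
  · rintro ⟨S₁, S₂, hS₁, hS₂, hne, -⟩ hwc
    exact hne (hwc S₁ S₂ hS₁ hS₂)
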